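/- Suppose the data points x₁,…,xₙ are affinely independent and the data are linearly separable (a hard-margin feasible pair exists). Let (w, b) be a hard margin solution and let v be a vector lying in the vectorSpan of the data that gives complete data piling (the maximal data piling direction). Then the following are equivalent: (i) there exists t ≠ 0 with w = t • v; (ii) there exists a convex direction that gives complete data piling. Moreover, when these hold, w is itself a convex direction that gives complete data piling. -/

import Mathlib

open scoped RealInnerProductSpace BigOperators

variable {E : Type*} [NormedAddCommGroup E] [InnerProductSpace ℝ E]

/-- A vector `v` gives complete data piling for the labeled data `(x, y)`. -/
def Piling {n : ℕ} (x : Fin n → E) (y : Fin n → ℝ) (v : E) : Prop :=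
  ∃ a b : ℝ, a ≠ 0 ∧ ∀ i, ⟪v, x i⟫ = a * y i + b

/-- A vector `v` is a convex direction. -/
def ConvexDir {n : ℕ} (x : Fin n → E) (y : Fin n → ℝ) (v : E) : Prop :=
  ∃ t : ℝ, t ≠ 0 ∧ ∃ cp ∈ convexHull ℝ (x '' {i | y i = 1}),
    ∃ cm ∈ convexHull ℝ (x '' {i | y i = -1}), v = t • (cp - cm)

/-- `(w, b)` is feasible for the hard margin SVM problem. -/
def HardFeasible {n : ℕ} (x : Fin n → E) (y : Fin n → ℝ) (w : E) (b : ℝ) : Prop :=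
  ∀ i, 1 ≤ y i * (⟪w, x i⟫ + b)

/-- `(w, b)` is a hard margin SVM solution. -/
def HardSolution {n : ℕ} (x : Fin n → E) (y : Fin n → ℝ) (w : E) (b : ℝ) : Prop :=
  HardFeasible x y w b ∧
    ∀ w' : E, ∀ b' : ℝ, HardFeasible x y w' b' → (1 / 2) * ‖w‖ ^ 2 ≤ (1 / 2) * ‖w'‖ ^ 2

lemma svmAux_inner_eq_on_hull {s : Set E} {u : E} {r : ℝ}
    (h : ∀ p ∈ s, ⟪u, p⟫ = r) : ∀ c ∈ convexHull ℝ s, ⟪u, c⟫ = r := by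
  have hconv : Convex ℝ {p : E | ⟪u, p⟫ = r} := by
    intro p hp q hq α β hα hβ hαβ
    simp only [Set.mem_setOf_eq] at hp hq ⊢
    rw [inner_add_right, real_inner_smul_right, real_inner_smul_right, hp, hq, ← add_mul, hαβ,
      one_mul]
  exact fun c hc => convexHull_min h hconv hc

lemma svmAux_inner_ge_on_hull {s : Set E} {u : E} {r b : ℝ}
    (h : ∀ p ∈ s, r ≤ ⟪u, p⟫ + b) : ∀ c ∈ convexHull ℝ s, r ≤ ⟪u, c⟫ + b := by
  have hconv : Convex ℝ {p : E | r ≤ ⟪u, p⟫ + b} := by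
    intro p hp q hq α β hα hβ hαβ
    simp only [Set.mem_setOf_eq] at hp hq ⊢
    rw [inner_add_right, real_inner_smul_right, real_inner_smul_right]
    have e1 : α * r + β * r = r := by rw [← add_mul, hαβ, one_mul]
    have e2 : α * b + β * b = b := by rw [← add_mul, hαβ, one_mul]
    nlinarith [mul_le_mul_of_nonneg_left hp hα, mul_le_mul_of_nonneg_left hq hβ, e1, e2]
  exact fun c hc => convexHull_min h hconv hc

lemma svmAux_inner_le_on_hull {s : Set E} {u : E} {r b : ℝ}
    (h : ∀ p ∈ s, ⟪u, p⟫ + b ≤ r) : ∀ c ∈ convexHull ℝ s, ⟪u, c⟫ + b ≤ r := by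
  have h' : ∀ p ∈ s, -r ≤ ⟪-u, p⟫ + -b := by
    intro p hp; rw [inner_neg_left]; linarith [h p hp]
  intro c hc
  have := svmAux_inner_ge_on_hull h' c hc
  rw [inner_neg_left] at this; linarith

lemma svmAux_hull_vsub_mem_vectorSpan {n : ℕ} (x : Fin n → E) {A B : Set (Fin n)} {cp cm : E}
    (hp : cp ∈ convexHull ℝ (x '' A)) (hm : cm ∈ convexHull ℝ (x '' B)) :
    cp - cm ∈ vectorSpan ℝ (Set.range x) := by
  have h1 : cp ∈ affineSpan ℝ (Set.range x) :=
    affineSpan_mono ℝ (Set.image_subset_range x A) (convexHull_subset_affineSpan (x '' A) hp)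
  have h2 : cm ∈ affineSpan ℝ (Set.range x) :=
    affineSpan_mono ℝ (Set.image_subset_range x B) (convexHull_subset_affineSpan (x '' B) hm)
  have := AffineSubspace.vsub_mem_direction h1 h2
  rwa [direction_affineSpan] at this

lemma svmAux_piling_unique {n : ℕ} (x : Fin n → E) (y : Fin n → ℝ)
    {u₁ u₂ : E} {a₁ b₁ a₂ b₂ : ℝ}
    (h1 : u₁ ∈ vectorSpan ℝ (Set.range x)) (h2 : u₂ ∈ vectorSpan ℝ (Set.range x))
    (ha₂ : a₂ ≠ 0)
    (hp1 : ∀ i, ⟪u₁, x i⟫ = a₁ * y i + b₁) (hp2 : ∀ i, ⟪u₂, x i⟫ = a₂ * y i + b₂) :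
    u₁ = (a₁ / a₂) • u₂ := by
  set z := u₁ - (a₁ / a₂) • u₂ with hz
  have hzmem : z ∈ vectorSpan ℝ (Set.range x) := sub_mem h1 (Submodule.smul_mem _ _ h2)
  have hzero : ∀ m ∈ vectorSpan ℝ (Set.range x), ⟪z, m⟫ = 0 := by
    intro m hm
    rw [vectorSpan_def] at hm
    induction hm using Submodule.span_induction with
    | mem m hmem =>
      obtain ⟨p, hp, q, hq, rfl⟩ := Set.mem_vsub.mp hmem
      obtain ⟨i, rfl⟩ := hp
      obtain ⟨j, rfl⟩ := hq
      rw [vsub_eq_sub, hz]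
      rw [inner_sub_left, inner_sub_right, inner_sub_right, real_inner_smul_left,
        real_inner_smul_left, hp1, hp1, hp2, hp2]
      field_simp
      ring
    | zero => simp
    | add m₁ m₂ _ _ ih1 ih2 => rw [inner_add_right, ih1, ih2, add_zero]
    | smul c m _ ih => rw [real_inner_smul_right, ih, mul_zero]
  have hzz : ⟪z, z⟫ = 0 := hzero z hzmem
  have : z = 0 := by rwa [inner_self_eq_zero] at hzz
  rw [hz] at this
  exact sub_eq_zero.mp this

lemma svmAux_sol_eq {n : ℕ} {x : Fin n → E} {y : Fin n → ℝ} {w : E} {b : ℝ}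
    (hsol : HardSolution x y w b) {δ : E} (hδ : δ ≠ 0) {b'' : ℝ}
    (hfeas : HardFeasible x y ((2 / ‖δ‖ ^ 2) • δ) b'')
    (hlb : 2 ≤ ⟪w, δ⟫) : w = (2 / ‖δ‖ ^ 2) • δ := by
  have hδn : (0:ℝ) < ‖δ‖ := norm_pos_iff.2 hδ
  have hwn : ‖(2 / ‖δ‖ ^ 2) • δ‖ = 2 / ‖δ‖ := by
    rw [norm_smul, Real.norm_eq_abs, abs_of_pos (by positivity)]
    field_simp
  have hopt := hsol.2 _ _ hfeas
  rw [hwn] at hopt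
  have hle : ‖w‖ ≤ 2 / ‖δ‖ := by
    nlinarith [norm_nonneg w, div_pos (by norm_num : (0:ℝ) < 2) hδn]
  have hcs : ⟪w, δ⟫ ≤ ‖w‖ * ‖δ‖ := real_inner_le_norm w δ
  have h2 : ‖w‖ * ‖δ‖ ≤ 2 := by
    calc ‖w‖ * ‖δ‖ ≤ (2 / ‖δ‖) * ‖δ‖ := by gcongr
    _ = 2 := by field_simp
  have heq : ⟪w, δ⟫ = ‖w‖ * ‖δ‖ := le_antisymm hcs (by linarith)
  have hkey := inner_eq_norm_mul_iff_real.mp heq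
  have hnorm : ‖w‖ * ‖δ‖ = 2 := le_antisymm h2 (by linarith)
  have : w = (‖δ‖⁻¹ * ‖w‖) • δ := by
    rw [mul_smul, ← hkey, smul_smul, inv_mul_cancel₀ (ne_of_gt hδn), one_smul]
  rw [this]
  congr 1
  field_simp
  nlinarith [hnorm]

lemma svmAux_closest_points {n : ℕ} (x : Fin n → E) (A B : Set (Fin n))
    (hA : (x '' A).Nonempty) (hB : (x '' B).Nonempty) :
    ∃ p ∈ convexHull ℝ (x '' A), ∃ q ∈ convexHull ℝ (x '' B),
      (∀ c ∈ convexHull ℝ (x '' A), ⟪q - p, c - p⟫ ≤ 0) ∧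
      (∀ c ∈ convexHull ℝ (x '' B), ⟪p - q, c - q⟫ ≤ 0) := by
  set Kp := convexHull ℝ (x '' A) with hKp
  set Km := convexHull ℝ (x '' B) with hKm
  have hKpc : IsCompact Kp := (Set.toFinite (x '' A)).isCompact_convexHull ℝ
  have hKmc : IsCompact Km := (Set.toFinite (x '' B)).isCompact_convexHull ℝ
  have hKpne : Kp.Nonempty := hA.mono (subset_convexHull ℝ _)
  have hKmne : Km.Nonempty := hB.mono (subset_convexHull ℝ _)
  obtain ⟨⟨p, q⟩, hpq, hmin⟩ := (hKpc.prod hKmc).exists_isMinOn (hKpne.prod hKmne)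
    (Continuous.continuousOn (by continuity : Continuous fun z : E × E => ‖z.1 - z.2‖))
  obtain ⟨hp, hq⟩ := hpq
  haveI : Nonempty Kp := hKpne.to_subtype
  haveI : Nonempty Km := hKmne.to_subtype
  refine ⟨p, hp, q, hq, ?_, ?_⟩
  · intro c hc
    have hinf : ‖q - p‖ = ⨅ w : Kp, ‖q - w‖ := by
      apply le_antisymm
      · apply le_ciInf
        intro c'
        have h' := hmin (Set.mk_mem_prod c'.2 hq)
        simp only at h'
        rw [norm_sub_rev q p, norm_sub_rev q (c' : E)]
        exact h'
      · have hbdd : BddBelow (Set.range fun w : Kp => ‖q - (w : E)‖) := by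
          refine ⟨0, ?_⟩; rintro r ⟨c', rfl⟩; exact norm_nonneg _
        exact ciInf_le hbdd (⟨p, hp⟩ : Kp)
    exact (norm_eq_iInf_iff_real_inner_le_zero (convex_convexHull ℝ _) hp).mp hinf c hc
  · intro c hc
    have hinf : ‖p - q‖ = ⨅ w : Km, ‖p - w‖ := by
      apply le_antisymm
      · apply le_ciInf
        intro c'
        exact hmin (Set.mk_mem_prod hp c'.2)
      · have hbdd : BddBelow (Set.range fun w : Km => ‖p - (w : E)‖) := by
          refine ⟨0, ?_⟩; rintro r ⟨c', rfl⟩; exact norm_nonneg _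
        exact ciInf_le hbdd (⟨q, hq⟩ : Km)
    exact (norm_eq_iInf_iff_real_inner_le_zero (convex_convexHull ℝ _) hq).mp hinf c hc

theorem hard_margin_eq_mdp_iff {n : ℕ} (x : Fin n → E) (y : Fin n → ℝ)
    (hy : ∀ i, y i = 1 ∨ y i = -1)
    (hpos : ∃ i, y i = 1) (hneg : ∃ i, y i = -1)
    (hind : AffineIndependent ℝ x)
    (hsep : ∃ w₀ : E, ∃ b₀ : ℝ, HardFeasible x y w₀ b₀)
    (w : E) (b : ℝ) (hsol : HardSolution x y w b)
    (v : E) (hv_span : v ∈ vectorSpan ℝ (Set.range x)) (hv_pile : Piling x y v) :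
    ((∃ t : ℝ, t ≠ 0 ∧ w = t • v) ↔ ∃ u : E, ConvexDir x y u ∧ Piling x y u) ∧
      ((∃ t : ℝ, t ≠ 0 ∧ w = t • v) → ConvexDir x y w ∧ Piling x y w) := by
  obtain ⟨iP, hiP⟩ := hpos
  obtain ⟨iM, hiM⟩ := hneg
  obtain ⟨av, bv, hav, hvp⟩ := hv_pile
  have hfwd : (∃ t : ℝ, t ≠ 0 ∧ w = t • v) → ConvexDir x y w ∧ Piling x y w := by
    rintro ⟨t, ht, hw⟩
    have hwpile : Piling x y w := ⟨t * av, t * bv, mul_ne_zero ht hav, fun i => by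
      rw [hw, real_inner_smul_left, hvp i]; ring⟩
    refine ⟨?_, hwpile⟩
    obtain ⟨a, b', ha, hwp⟩ := hwpile
    have hA : (1:ℝ) ≤ a + b' + b := by
      have h1 := hsol.1 iP; rw [hwp iP, hiP] at h1; linarith
    have hB : (1:ℝ) ≤ a - b' - b := by
      have h1 := hsol.1 iM; rw [hwp iM, hiM] at h1; linarith
    have ha1 : (1:ℝ) ≤ a := by linarith
    obtain ⟨p, hp, q, hq, hVIp, hVIm⟩ := svmAux_closest_points x {i | y i = 1} {i | y i = -1}
      ⟨x iP, Set.mem_image_of_mem x hiP⟩ ⟨x iM, Set.mem_image_of_mem x hiM⟩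
    set δ := p - q with hδdef
    have hwp_hull : ∀ c ∈ convexHull ℝ (x '' {i | y i = 1}), ⟪w, c⟫ = a + b' := by
      apply svmAux_inner_eq_on_hull
      rintro _ ⟨i, hi, rfl⟩
      rw [Set.mem_setOf_eq] at hi
      rw [hwp i, hi]; ring
    have hwm_hull : ∀ c ∈ convexHull ℝ (x '' {i | y i = -1}), ⟪w, c⟫ = -a + b' := by
      apply svmAux_inner_eq_on_hull
      rintro _ ⟨i, hi, rfl⟩
      rw [Set.mem_setOf_eq] at hi
      rw [hwp i, hi]; ring
    have hwδ : ⟪w, δ⟫ = 2 * a := by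
      rw [hδdef, inner_sub_right, hwp_hull p hp, hwm_hull q hq]; ring
    have hδne : δ ≠ 0 := by
      intro h0; rw [h0, inner_zero_right] at hwδ; linarith
    have hMpos : (0:ℝ) < ‖δ‖ ^ 2 := by
      have := norm_pos_iff.2 hδne; positivity
    have hM : ⟪δ, p⟫ - ⟪δ, q⟫ = ‖δ‖ ^ 2 := by
      rw [← inner_sub_right, ← hδdef, real_inner_self_eq_norm_sq]
    have hVIp' : ∀ c ∈ convexHull ℝ (x '' {i | y i = 1}), ⟪δ, p⟫ ≤ ⟪δ, c⟫ := by
      intro c hc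
      have h1 := hVIp c hc
      have h2 : ⟪-δ, c - p⟫ ≤ 0 := by rw [hδdef, neg_sub]; exact h1
      rw [inner_neg_left, inner_sub_right] at h2; linarith
    have hVIm' : ∀ c ∈ convexHull ℝ (x '' {i | y i = -1}), ⟪δ, c⟫ ≤ ⟪δ, q⟫ := by
      intro c hc
      have h1 := hVIm c hc
      rw [inner_sub_right] at h1; linarith
    have hfeas : HardFeasible x y ((2 / ‖δ‖ ^ 2) • δ) (-(⟪δ, p⟫ + ⟪δ, q⟫) / ‖δ‖ ^ 2) := by
      intro i
      have hrw : ∀ c : ℝ, 2 / ‖δ‖ ^ 2 * c + -(⟪δ, p⟫ + ⟪δ, q⟫) / ‖δ‖ ^ 2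
          = (2 * c - (⟪δ, p⟫ + ⟪δ, q⟫)) / ‖δ‖ ^ 2 := by
        intro c; field_simp; ring
      rcases hy i with hyi | hyi
      · have hx : ⟪δ, p⟫ ≤ ⟪δ, x i⟫ :=
          hVIp' (x i) (subset_convexHull ℝ _ (Set.mem_image_of_mem x hyi))
        rw [hyi, one_mul, real_inner_smul_left, hrw, le_div_iff₀ hMpos]
        linarith
      · have hx : ⟪δ, x i⟫ ≤ ⟪δ, q⟫ :=
          hVIm' (x i) (subset_convexHull ℝ _ (Set.mem_image_of_mem x hyi))
        rw [hyi, real_inner_smul_left, hrw]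
        have hle : (2 * ⟪δ, x i⟫ - (⟪δ, p⟫ + ⟪δ, q⟫)) / ‖δ‖ ^ 2 ≤ -1 := by
          rw [div_le_iff₀ hMpos]; linarith
        nlinarith
    have hlb : 2 ≤ ⟪w, δ⟫ := by rw [hwδ]; linarith
    have hw_eq := svmAux_sol_eq hsol hδne hfeas hlb
    exact ⟨2 / ‖δ‖ ^ 2, ne_of_gt (by positivity), p, hp, q, hq, hw_eq⟩
  have hback : (∃ u : E, ConvexDir x y u ∧ Piling x y u) →
      ∃ t : ℝ, t ≠ 0 ∧ w = t • v := by
    rintro ⟨u, ⟨s, hs, dP, hdP, dM, hdM, hu⟩, ⟨a, b₀, ha, hup⟩⟩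
    set δ := dP - dM with hδdef
    have hup_hull : ∀ c ∈ convexHull ℝ (x '' {i | y i = 1}), ⟪u, c⟫ = a + b₀ := by
      apply svmAux_inner_eq_on_hull
      rintro _ ⟨i, hi, rfl⟩
      rw [Set.mem_setOf_eq] at hi
      rw [hup i, hi]; ring
    have hum_hull : ∀ c ∈ convexHull ℝ (x '' {i | y i = -1}), ⟪u, c⟫ = -a + b₀ := by
      apply svmAux_inner_eq_on_hull
      rintro _ ⟨i, hi, rfl⟩
      rw [Set.mem_setOf_eq] at hi
      rw [hup i, hi]; ring
    have huδ : ⟪u, δ⟫ = 2 * a := by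
      rw [hδdef, inner_sub_right, hup_hull dP hdP, hum_hull dM hdM]; ring
    have hsM : s * ‖δ‖ ^ 2 = 2 * a := by
      have h1 : ⟪u, δ⟫ = s * ‖δ‖ ^ 2 := by
        rw [hu, real_inner_smul_left, real_inner_self_eq_norm_sq]
      linarith [h1, huδ]
    have hδne : δ ≠ 0 := by
      intro h0
      rw [h0, norm_zero] at hsM
      apply ha
      have : s * 0 ^ 2 = 0 := by ring
      linarith [hsM, this]
    have hMpos : (0:ℝ) < ‖δ‖ ^ 2 := by
      have := norm_pos_iff.2 hδne; positivity
    have h2M : 2 / ‖δ‖ ^ 2 = s / a := by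
      rw [div_eq_div_iff (ne_of_gt hMpos) ha]; linarith [hsM]
    have hfeas : HardFeasible x y ((2 / ‖δ‖ ^ 2) • δ) (-b₀ / a) := by
      intro i
      have hδx : ⟪δ, x i⟫ = (a * y i + b₀) / s := by
        have h1 := hup i
        rw [hu, real_inner_smul_left] at h1
        rw [eq_div_iff hs]; linarith
      have hval : s / a * ((a * y i + b₀) / s) + -b₀ / a = y i := by
        field_simp; ring
      rw [real_inner_smul_left, hδx, h2M, hval]
      rcases hy i with hyi | hyi <;> rw [hyi] <;> norm_num
    have hlb : 2 ≤ ⟪w, δ⟫ := by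
      have h1 : (1:ℝ) ≤ ⟪w, dP⟫ + b := by
        refine svmAux_inner_ge_on_hull ?_ dP hdP
        rintro _ ⟨i, hi, rfl⟩
        rw [Set.mem_setOf_eq] at hi
        have := hsol.1 i; rw [hi] at this; linarith
      have h2 : ⟪w, dM⟫ + b ≤ -1 := by
        refine svmAux_inner_le_on_hull ?_ dM hdM
        rintro _ ⟨i, hi, rfl⟩
        rw [Set.mem_setOf_eq] at hi
        have := hsol.1 i; rw [hi] at this; linarith
      rw [hδdef, inner_sub_right]; linarith
    have hw_eq := svmAux_sol_eq hsol hδne hfeas hlb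
    have hwu : w = (1 / a) • u := by
      rw [hw_eq, hu, smul_smul, h2M]
      congr 1
      ring
    have humem : u ∈ vectorSpan ℝ (Set.range x) := by
      rw [hu]
      exact Submodule.smul_mem _ _ (svmAux_hull_vsub_mem_vectorSpan x hdP hdM)
    have huv : u = (a / av) • v := svmAux_piling_unique x y humem hv_span hav hup hvp
    refine ⟨1 / av, one_div_ne_zero hav, ?_⟩
    rw [hwu, huv, smul_smul]
    congr 1
    field_simp
  exact ⟨⟨fun h => ⟨w, hfwd h⟩, hback⟩, hfwd⟩
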